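/- For any four octonions a, b, c, d, one has 2·Re(ab)·Re(cd) = Re((a c̄)(d̄ b) + (ad)(cb)). -/

import Mathlib

noncomputable section

/-- The octonions, constructed from the quaternions via the Cayley–Dickson doubling. -/
structure Octonion : Type where
  q1 : Quaternion ℝ
  q2 : Quaternion ℝ

namespace Octonion

instance : Zero Octonion := ⟨⟨0, 0⟩⟩
instance : One Octonion := ⟨⟨1, 0⟩⟩
instance : Add Octonion := ⟨fun x y => ⟨x.q1 + y.q1, x.q2 + y.q2⟩⟩
instance : Neg Octonion := ⟨fun x => ⟨-x.q1, -x.q2⟩⟩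
instance : Sub Octonion := ⟨fun x y => ⟨x.q1 - y.q1, x.q2 - y.q2⟩⟩

/-- Cayley–Dickson multiplication. -/
instance : Mul Octonion :=
  ⟨fun x y => ⟨x.q1 * y.q1 - star y.q2 * x.q2, y.q2 * x.q1 + x.q2 * star y.q1⟩⟩

instance : SMul ℝ Octonion := ⟨fun r x => ⟨r • x.q1, r • x.q2⟩⟩

/-- Octonionic conjugation. -/
def conj (x : Octonion) : Octonion := ⟨star x.q1, -x.q2⟩

/-- The real part of an octonion. -/
def re (x : Octonion) : ℝ := x.q1.re

/-- The squared norm of an octonion. -/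
def normSq (x : Octonion) : ℝ := Quaternion.normSq x.q1 + Quaternion.normSq x.q2

/-- The multiplicative inverse of a nonzero octonion. -/
instance : Inv Octonion := ⟨fun x => (normSq x)⁻¹ • conj x⟩

/-- The commutator of two octonions. -/
def comm (x y : Octonion) : Octonion := x * y - y * x

/-- The associator of three octonions. -/
def assoc (x y z : Octonion) : Octonion := (x * y) * z - x * (y * z)

/-- The derivation `D_{a,b}` of the octonions. -/
def D (a b x : Octonion) : Octonion := comm (comm a b) x - (3 : ℝ) • assoc a b x

lemma mul_q1 (x y : Octonion) : (x * y).q1 = x.q1 * y.q1 - star y.q2 * x.q2 := rfl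
lemma add_q1 (x y : Octonion) : (x + y).q1 = x.q1 + y.q1 := rfl
lemma mul_q2 (x y : Octonion) : (x * y).q2 = y.q2 * x.q1 + x.q2 * star y.q1 := rfl

end Octonion

open Octonion

set_option maxHeartbeats 2000000 in
theorem two_re_mul_re (a b c d : Octonion) :
    2 * re (a * b) * re (c * d) = re ((a * conj c) * (conj d * b) + (a * d) * (c * b)) := by
  obtain ⟨a1,a5⟩ := a
  obtain ⟨b1,b5⟩ := b
  obtain ⟨c1,c5⟩ := c
  obtain ⟨d1,d5⟩ := d
  simp only [re, conj, mul_q1, mul_q2, add_q1, Quaternion.re_sub, Quaternion.re_add, Quaternion.re_mul,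
    Quaternion.imI_sub, Quaternion.imJ_sub, Quaternion.imK_sub, Quaternion.imI_add,
    Quaternion.imJ_add, Quaternion.imK_add, Quaternion.imI_mul, Quaternion.imJ_mul, Quaternion.imK_mul,
    Quaternion.re_neg, Quaternion.imI_neg, Quaternion.imJ_neg, Quaternion.imK_neg,
    Quaternion.re_star, Quaternion.imI_star, Quaternion.imJ_star, Quaternion.imK_star]
  ring
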